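/- arXiv:2312.16259 — 4 statements merged into one kernel-verified Lean document; each statement's English description precedes it below -/
import Mathlib

section
/- If G and H are Left dead-ends with G ≥ H, then the formal birthday (height of the game tree) of G is at most the formal birthday of H. -/
/-- A Left dead-end: a partizan game in which no subposition has a Left option,
modeled as a finitely-branching rooted tree of Right options. -/
inductive LDE : Type where
  | node : List LDE → LDE

/-- The (Right) options of a Left dead-end. -/
def LDE.opts : LDE → List LDE
  | .node l => l

/-- The dead-end order: `G ≥ H` iff every Right option of `G` is `≥` some Right
option of `H`, and if `G` has no Right options then neither does `H`. -/
def LDE.Ge : LDE → LDE → Prop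
  | .node gs, .node hs =>
      (∀ g ∈ gs, ∃ h ∈ hs, LDE.Ge g h) ∧ (gs = [] → hs = [])
termination_by G _ => sizeOf G
decreasing_by
  have := List.sizeOf_lt_of_mem ‹g ∈ gs›; simp; omega

/-- Equality (equivalence) in the dead-end order. -/
def LDE.Eqv (G H : LDE) : Prop := LDE.Ge G H ∧ LDE.Ge H G

/-- The formal birthday: the height of the game tree. -/
def LDE.fb : LDE → ℕ
  | .node l => l.attach.foldr (fun g m => max (LDE.fb g.1 + 1) m) 0
termination_by G => sizeOf G
decreasing_by
  have := List.sizeOf_lt_of_mem g.2; simp; omega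


lemma foldr_max_le {α : Type*} (f : α → ℕ) (l : List α) (n : ℕ) :
    l.foldr (fun a m => max (f a + 1) m) 0 ≤ n ↔ ∀ a ∈ l, f a + 1 ≤ n := by
  induction l with
  | nil => simp
  | cons a t ih => simp [ih, and_comm]

lemma fb_node_le_iff (l : List LDE) (n : ℕ) :
    (LDE.node l).fb ≤ n ↔ ∀ g ∈ l, g.fb + 1 ≤ n := by
  rw [LDE.fb, foldr_max_le]
  constructor
  · intro h g hg; exact h ⟨g, hg⟩ (List.mem_attach _ _)
  · intro h g hg; exact h g.1 g.2

lemma lt_fb_of_mem {g : LDE} {l : List LDE} (hg : g ∈ l) : g.fb < (LDE.node l).fb :=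
  (fb_node_le_iff l _).mp le_rfl g hg

/-- if `G ≥ H` in the dead-end order, then the formal birthday of
`G` is at most that of `H`. -/
theorem stmt1 (G H : LDE) (h : LDE.Ge G H) : G.fb ≤ H.fb :=
  match G, H, h with
  | .node gs, .node hs, h => by
    rw [LDE.Ge] at h
    rw [fb_node_le_iff]
    intro g hg
    obtain ⟨h', hh', hge⟩ := h.1 g hg
    have := stmt1 g h' hge
    have := lt_fb_of_mem hh'
    omega
termination_by sizeOf G
decreasing_by
  have := List.sizeOf_lt_of_mem hg; simp; omega
end

section
/- Suppose G and H are Left dead-ends such that no subposition of G or of H has a dominated Right option (i.e., in every subposition, the Right options form an antichain with respect to equivalence: no Right option is ≤ another distinct Right option). If G = H (meaning G ≥ H and H ≥ G), then G and H are identical as game trees (isomorphic). -/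
/-- No subposition has a dominated Right option: at every subposition, distinct
entries of the option list are incomparable. -/
inductive LDE.Reduced : LDE → Prop
  | mk (l : List LDE) :
      l.Pairwise (fun a b => ¬ LDE.Ge a b ∧ ¬ LDE.Ge b a) →
      (∀ g ∈ l, LDE.Reduced g) →
      LDE.Reduced (.node l)

/-- `G` and `H` are identical as game trees (isomorphic up to reordering of
options). -/
def LDE.Ident : LDE → LDE → Prop
  | .node gs, .node hs =>
      (∀ g ∈ gs, ∃ h ∈ hs.attach, LDE.Ident g h.1) ∧
      (∀ h ∈ hs, ∃ g ∈ gs.attach, LDE.Ident g.1 h)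
termination_by G H => sizeOf G + sizeOf H
decreasing_by
  · have h1 := List.sizeOf_lt_of_mem ‹g ∈ gs›
    have h2 := List.sizeOf_lt_of_mem h.2
    simp; omega
  · have h1 := List.sizeOf_lt_of_mem g.2
    have h2 := List.sizeOf_lt_of_mem ‹h ∈ hs›
    simp; omega


theorem LDE.ge_refl : ∀ G : LDE, LDE.Ge G G
  | .node gs => by
      rw [LDE.Ge]
      exact ⟨fun g hg => ⟨g, hg, LDE.ge_refl g⟩, fun h => h⟩
termination_by G => sizeOf G
decreasing_by
  have := List.sizeOf_lt_of_mem ‹g ∈ gs›; simp; omega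

theorem LDE.ge_trans : ∀ G H K : LDE, LDE.Ge G H → LDE.Ge H K → LDE.Ge G K
  | .node gs, .node hs, .node ks => by
      rw [LDE.Ge, LDE.Ge, LDE.Ge]
      rintro ⟨a1, a2⟩ ⟨b1, b2⟩
      refine ⟨fun g hg => ?_, fun e => b2 (a2 e)⟩
      obtain ⟨h, hh, ghh⟩ := a1 g hg
      obtain ⟨k, hk, hhk⟩ := b1 h hh
      exact ⟨k, hk, LDE.ge_trans g h k ghh hhk⟩
termination_by G _ _ => sizeOf G
decreasing_by
  have := List.sizeOf_lt_of_mem ‹g ∈ gs›; simp; omega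

theorem LDE.pairwise_eq {l : List LDE}
    (hp : l.Pairwise (fun a b => ¬ LDE.Ge a b ∧ ¬ LDE.Ge b a))
    {a b : LDE} (ha : a ∈ l) (hb : b ∈ l) (hab : LDE.Ge a b) : a = b := by
  by_contra hne
  haveI : Std.Symm (fun a b : LDE => ¬ LDE.Ge a b ∧ ¬ LDE.Ge b a) := ⟨fun x y h => ⟨h.2, h.1⟩⟩
  have := List.Pairwise.forall hp ha hb hne
  exact this.1 hab

theorem LDE.Reduced.pairwise {l : List LDE} (h : LDE.Reduced (.node l)) :
    l.Pairwise (fun a b => ¬ LDE.Ge a b ∧ ¬ LDE.Ge b a) := by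
  cases h; assumption

theorem LDE.Reduced.each {l : List LDE} (h : LDE.Reduced (.node l)) :
    ∀ g ∈ l, LDE.Reduced g := by
  cases h; assumption

theorem stmt5aux : ∀ G H : LDE, LDE.Reduced G → LDE.Reduced H →
    LDE.Ge G H → LDE.Ge H G → LDE.Ident G H
  | .node gs, .node hs => by
      intro hG hH h1 h2
      rw [LDE.Ge] at h1 h2
      rw [LDE.Ident]
      have pG := hG.pairwise
      have rG := hG.each
      have pH := hH.pairwise
      have rH := hH.each
      constructor
      · intro g hg
        obtain ⟨h, hh, ghh⟩ := h1.1 g hg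
        obtain ⟨g', hg', hhg'⟩ := h2.1 h hh
        have : g = g' := LDE.pairwise_eq pG hg hg' (LDE.ge_trans g h g' ghh hhg')
        subst this
        exact ⟨⟨h, hh⟩, List.mem_attach _ _, stmt5aux g h (rG g hg) (rH h hh) ghh hhg'⟩
      · intro h hh
        obtain ⟨g, hg, hgh⟩ := h2.1 h hh
        obtain ⟨h', hh', hgh'⟩ := h1.1 g hg
        have : h = h' := LDE.pairwise_eq pH hh hh' (LDE.ge_trans h g h' hgh hgh')
        subst this
        exact ⟨⟨g, hg⟩, List.mem_attach _ _, stmt5aux g h (rG g hg) (rH h hh) hgh' hgh⟩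
termination_by G H => sizeOf G + sizeOf H
decreasing_by
  · have h1 := List.sizeOf_lt_of_mem ‹g ∈ gs›
    have h2 := List.sizeOf_lt_of_mem ‹h ∈ hs›
    simp; omega
  · have h1 := List.sizeOf_lt_of_mem ‹g ∈ gs›
    have h2 := List.sizeOf_lt_of_mem ‹h ∈ hs›
    simp; omega

/-- Left dead-ends with no dominated options in any subposition
that are equal in the dead-end order are identical as game trees. -/
theorem stmt5 (G H : LDE) (hG : LDE.Reduced G) (hH : LDE.Reduced H)
    (h1 : LDE.Ge G H) (h2 : LDE.Ge H G) : LDE.Ident G H := stmt5aux G H hG hH h1 h2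
end

section
/- The dead-end order ≥ on Left dead-ends respects addition: if G ≥ H, then G + J ≥ H + J for every Left dead-end J. -/
/-- Disjunctive sum of Left dead-ends: the Right options of `G + H` are
`G^R + H` and `G + H^R`. -/
def LDE.add : LDE → LDE → LDE
  | .node gs, .node hs =>
      .node (gs.attach.map (fun g => LDE.add g.1 (.node hs)) ++
             hs.attach.map (fun h => LDE.add (.node gs) h.1))
termination_by g h => sizeOf g + sizeOf h
decreasing_by
  · have := List.sizeOf_lt_of_mem g.2; simp; omega
  · have := List.sizeOf_lt_of_mem h.2; simp; omega

theorem LDE.add_ge : ∀ (G H J : LDE), LDE.Ge G H → LDE.Ge (G.add J) (H.add J)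
  | .node gs, .node hs, .node js, h => by
    rw [LDE.Ge] at h
    obtain ⟨h1, h2⟩ := h
    rw [LDE.add, LDE.add, LDE.Ge]
    constructor
    · intro x hx
      simp only [List.mem_append, List.mem_map, List.mem_attach, true_and,
        Subtype.exists] at hx
      rcases hx with ⟨g, hg, rfl⟩ | ⟨j, hj, rfl⟩
      · obtain ⟨h', hh', hge⟩ := h1 g hg
        refine ⟨h'.add (.node js), ?_, LDE.add_ge g h' (.node js) hge⟩
        simp only [List.mem_append, List.mem_map, List.mem_attach, true_and,
          Subtype.exists]
        exact Or.inl ⟨h', hh', rfl⟩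
      · refine ⟨(LDE.node hs).add j, ?_, LDE.add_ge (.node gs) (.node hs) j (by rw [LDE.Ge]; exact ⟨h1, h2⟩)⟩
        simp only [List.mem_append, List.mem_map, List.mem_attach, true_and,
          Subtype.exists]
        exact Or.inr ⟨j, hj, rfl⟩
    · intro he
      simp only [List.append_eq_nil_iff, List.map_eq_nil_iff, List.attach_eq_nil_iff] at he ⊢
      exact ⟨h2 he.1, he.2⟩
termination_by G _ J => sizeOf G + sizeOf J
decreasing_by
  · have := List.sizeOf_lt_of_mem hg; simp; omega
  · have := List.sizeOf_lt_of_mem hj; simp; omega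

/-- the dead-end order respects addition. -/
theorem stmt7 (G H J : LDE) (h : LDE.Ge G H) :
    LDE.Ge (G.add J) (H.add J) := by
  exact LDE.add_ge G H J h
end

section
/- For each n ≥ 1, the partially ordered set L_n* consisting of the equivalence classes of nonzero Left dead-ends of birthday at most n, together with an adjoined top element ∇ greater than all of them, is a distributive lattice, where the meet of two nonzero dead-ends G and H is the game whose Right options are the union of the Right options of G and H. -/
/-- The birthday of `G`: the least formal birthday among all forms of `G`
(Left dead-ends equal to `G` in the dead-end order). -/
noncomputable def LDE.bday (G : LDE) : ℕ :=
  sInf {n | ∃ K : LDE, LDE.Eqv K G ∧ K.fb = n}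

/-- A realization of `L_n*` (the nonzero Left dead-ends of birthday at most `n`
up to equivalence, with an adjoined top element `∇`) as a distributive lattice
in which meet is given by union of Right-option sets. -/
structure DistribLatticeRealization (n : ℕ) where
  carrier : Type
  [lat : DistribLattice carrier]
  /-- the adjoined top element `∇` -/
  nabla : carrier
  /-- the map sending a dead-end to its equivalence class -/
  f : LDE → carrier
  le_nabla : ∀ x : carrier, lat.le x nabla
  f_ne_nabla : ∀ G : LDE, G.opts ≠ [] → G.bday ≤ n → f G ≠ nabla
  surj : ∀ x : carrier, x ≠ nabla →
    ∃ G : LDE, G.opts ≠ [] ∧ G.bday ≤ n ∧ f G = x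
  /-- the lattice order is (the reverse of) the dead-end order on classes -/
  le_iff : ∀ G H : LDE, G.opts ≠ [] → G.bday ≤ n → H.opts ≠ [] → H.bday ≤ n →
    (lat.le (f G) (f H) ↔ LDE.Ge H G)
  /-- meet is given by the union of the Right options -/
  inf_eq : ∀ G H : LDE, G.opts ≠ [] → G.bday ≤ n → H.opts ≠ [] → H.bday ≤ n →
    lat.inf (f G) (f H) = f (LDE.node (G.opts ++ H.opts))

open Classical

namespace LDE

theorem ge_def (gs hs : List LDE) :
    Ge (node gs) (node hs) ↔
      ((∀ g ∈ gs, ∃ h ∈ hs, Ge g h) ∧ (gs = [] → hs = [])) := by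
  rw [Ge]

theorem ind (P : LDE → Prop) (h : ∀ l, (∀ g ∈ l, P g) → P (node l)) : ∀ G, P G
  | node l => h l (fun g hg => ind P h g)
termination_by G => sizeOf G
decreasing_by have := List.sizeOf_lt_of_mem hg; simp; omega

theorem ge_refl_s10 : ∀ G : LDE, Ge G G := by
  refine ind _ ?_
  intro l ih
  rw [ge_def]
  exact ⟨fun g hg => ⟨g, hg, ih g hg⟩, fun h => h⟩

theorem ge_trans_s10 : ∀ G H K : LDE, Ge G H → Ge H K → Ge G K := by
  refine ind (fun G => ∀ H K, Ge G H → Ge H K → Ge G K) ?_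
  rintro gs ih ⟨hs⟩ ⟨ks⟩ h1 h2
  rw [ge_def] at *
  refine ⟨?_, fun h => h2.2 (h1.2 h)⟩
  intro g hg
  obtain ⟨h, hh, hgh⟩ := h1.1 g hg
  obtain ⟨k, hk, hhk⟩ := h2.1 h hh
  exact ⟨k, hk, ih g hg _ _ hgh hhk⟩

theorem foldr_attach {α β : Type*} (l : List α) (f : α → β → β) (b : β) :
    l.attach.foldr (fun x acc => f x.1 acc) b = l.foldr f b := by
  induction l with
  | nil => rfl
  | cons a l ih => simp [List.attach_cons, List.foldr_map, ih]

theorem fb_node (l : List LDE) :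
    fb (node l) = l.foldr (fun g m => max (fb g + 1) m) 0 := by
  rw [fb]; exact foldr_attach l (fun g m => max (fb g + 1) m) 0

theorem foldr_le_iff (l : List LDE) (m : ℕ) :
    l.foldr (fun g k => max (fb g + 1) k) 0 ≤ m ↔ ∀ g ∈ l, fb g < m := by
  induction l with
  | nil => simp
  | cons a l ih => simp [ih, Nat.add_one_le_iff]

theorem fb_le_of (l : List LDE) (m : ℕ) (h : ∀ g ∈ l, fb g < m) : fb (node l) ≤ m := by
  rw [fb_node, foldr_le_iff]; exact h

theorem fb_lt {g : LDE} {l : List LDE} (hg : g ∈ l) : fb g < fb (node l) := by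
  have := (foldr_le_iff l (fb (node l))).1 (by rw [fb_node])
  exact this g hg

theorem eqv_refl (G : LDE) : Eqv G G := ⟨ge_refl_s10 G, ge_refl_s10 G⟩

theorem eqv_symm {G H : LDE} (h : Eqv G H) : Eqv H G := ⟨h.2, h.1⟩

theorem eqv_trans {G H K : LDE} (h1 : Eqv G H) (h2 : Eqv H K) : Eqv G K :=
  ⟨ge_trans_s10 _ _ _ h1.1 h2.1, ge_trans_s10 _ _ _ h2.2 h1.2⟩

theorem bday_le_fb (G : LDE) : bday G ≤ fb G := Nat.sInf_le ⟨G, eqv_refl G, rfl⟩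

theorem bday_le_iff {G : LDE} {m : ℕ} :
    bday G ≤ m ↔ ∃ K : LDE, Eqv K G ∧ fb K ≤ m := by
  constructor
  · intro h
    have hne : {k | ∃ K : LDE, Eqv K G ∧ K.fb = k}.Nonempty := ⟨fb G, G, eqv_refl G, rfl⟩
    obtain ⟨K, hK, hfb⟩ := Nat.sInf_mem hne
    exact ⟨K, hK, hfb.le.trans h⟩
  · rintro ⟨K, h1, h2⟩
    exact le_trans (Nat.sInf_le ⟨K, h1, rfl⟩) h2

theorem ne_nil_of_ge {K G : LDE} (h : Ge K G) (hG : G.opts ≠ []) : K.opts ≠ [] := by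
  obtain ⟨ks⟩ := K; obtain ⟨gs⟩ := G
  rw [ge_def] at h
  intro hk
  exact hG (h.2 hk)

theorem ge_append {gs gs' hs hs' : List LDE}
    (h1 : Ge (node gs) (node gs')) (h2 : Ge (node hs) (node hs')) :
    Ge (node (gs ++ hs)) (node (gs' ++ hs')) := by
  rw [ge_def] at *
  constructor
  · intro g hg
    rcases List.mem_append.1 hg with hg | hg
    · obtain ⟨g', hg', hgg⟩ := h1.1 g hg
      exact ⟨g', List.mem_append.2 (Or.inl hg'), hgg⟩
    · obtain ⟨g', hg', hgg⟩ := h2.1 g hg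
      exact ⟨g', List.mem_append.2 (Or.inr hg'), hgg⟩
  · intro h
    rcases List.append_eq_nil_iff.mp h with ⟨e1, e2⟩
    simp [h1.2 e1, h2.2 e2]

/-- A finite list of representatives for all dead ends of formal birthday `≤ m`. -/
noncomputable def R : ℕ → List LDE
  | 0 => [node []]
  | m + 1 => (R m).sublists.map node

theorem fb_R : ∀ {m : ℕ} {r : LDE}, r ∈ R m → fb r ≤ m := by
  intro m
  induction m with
  | zero =>
    intro r hr
    simp [R] at hr
    subst hr
    simp [fb_node]
  | succ m ih =>
    intro r hr
    simp [R] at hr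
    obtain ⟨s, hs, rfl⟩ := hr
    exact fb_le_of _ _ fun g hg =>
      Nat.lt_succ_of_le (ih (hs.subset hg))

theorem R_cover : ∀ (m : ℕ) (G : LDE), fb G ≤ m → ∃ r ∈ R m, Eqv r G := by
  intro m
  induction m with
  | zero =>
    rintro ⟨gs⟩ h
    have hgs : gs = [] := by
      cases gs with
      | nil => rfl
      | cons a l => exact absurd (fb_lt (List.mem_cons_self : a ∈ a :: l)) (by omega)
    subst hgs
    exact ⟨node [], by simp [R], eqv_refl _⟩
  | succ m ih =>
    rintro ⟨gs⟩ h
    have hopt : ∀ g ∈ gs, ∃ r ∈ R m, Eqv r g := fun g hg =>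
      ih g (by have := fb_lt hg; omega)
    set L := (R m).filter (fun r => decide (∃ g ∈ gs, Eqv r g)) with hL
    refine ⟨node L, ?_, ?_, ?_⟩
    · simp only [R, List.mem_map, List.mem_sublists]
      exact ⟨L, List.filter_sublist, rfl⟩
    · rw [ge_def]
      constructor
      · intro r hr
        have := List.of_mem_filter hr
        obtain ⟨g, hg, hrg⟩ := by simpa using this
        exact ⟨g, hg, hrg.1⟩
      · intro hLnil
        by_contra hgs
        obtain ⟨g, hg⟩ := List.exists_mem_of_ne_nil gs hgs
        obtain ⟨r, hrR, hre⟩ := hopt g hg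
        have : r ∈ L := List.mem_filter.2 ⟨hrR, by simp; exact ⟨g, hg, hre⟩⟩
        rw [hLnil] at this
        exact absurd this List.not_mem_nil
    · rw [ge_def]
      constructor
      · intro g hg
        obtain ⟨r, hrR, hre⟩ := hopt g hg
        exact ⟨r, List.mem_filter.2 ⟨hrR, by simp; exact ⟨g, hg, hre⟩⟩, hre.2⟩
      · rintro rfl
        rw [hL, List.filter_eq_nil_iff]
        intro r _
        simp

/-- The class invariant of a nonzero dead end: the set of dead ends of birthday
`≤ n-1` that are `≥` some Right option. -/
def setF (n : ℕ) (G : LDE) : Set LDE :=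
  {X | (∃ g ∈ G.opts, Ge X g) ∧ X.bday ≤ n - 1}

def Pred (n : ℕ) (S : Set LDE) : Prop :=
  S = ∅ ∨ ∃ G : LDE, G.opts ≠ [] ∧ G.bday ≤ n ∧ setF n G = S

def Car (n : ℕ) : Type := {S : Set LDE // Pred n S}

theorem setF_mono {n : ℕ} {G G' : LDE} (h : Ge G G') : setF n G ⊆ setF n G' := by
  rintro X ⟨⟨g, hg, hXg⟩, hb⟩
  obtain ⟨gs⟩ := G; obtain ⟨gs'⟩ := G'
  rw [ge_def] at h
  obtain ⟨g', hg', hgg'⟩ := h.1 g hg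
  exact ⟨⟨g', hg', ge_trans_s10 _ _ _ hXg hgg'⟩, hb⟩

theorem setF_congr {n : ℕ} {G G' : LDE} (h : Eqv G G') : setF n G = setF n G' :=
  subset_antisymm (setF_mono h.1) (setF_mono h.2)

theorem bday_append {n : ℕ} {G H : LDE} (hG : G.bday ≤ n) (hH : H.bday ≤ n) :
    (node (G.opts ++ H.opts)).bday ≤ n := by
  obtain ⟨K, hKG, hKfb⟩ := bday_le_iff.1 hG
  obtain ⟨K', hKH, hKfb'⟩ := bday_le_iff.1 hH
  refine bday_le_iff.2 ⟨node (K.opts ++ K'.opts), ?_, ?_⟩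
  · obtain ⟨gs⟩ := G; obtain ⟨hs⟩ := H; obtain ⟨ks⟩ := K; obtain ⟨ks'⟩ := K'
    exact ⟨ge_append hKG.1 hKH.1, ge_append hKG.2 hKH.2⟩
  · refine fb_le_of _ _ ?_
    intro g hg
    rcases List.mem_append.1 hg with hg | hg
    · obtain ⟨ks⟩ := K
      exact lt_of_lt_of_le (fb_lt hg) hKfb
    · obtain ⟨ks'⟩ := K'
      exact lt_of_lt_of_le (fb_lt hg) hKfb'

theorem setF_union (n : ℕ) (G H : LDE) :
    setF n (node (G.opts ++ H.opts)) = setF n G ∪ setF n H := by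
  ext X
  simp only [setF, Set.mem_setOf_eq, Set.mem_union, opts, List.mem_append]
  constructor
  · rintro ⟨⟨g, hg | hg, hXg⟩, hb⟩
    · exact Or.inl ⟨⟨g, hg, hXg⟩, hb⟩
    · exact Or.inr ⟨⟨g, hg, hXg⟩, hb⟩
  · rintro (⟨⟨g, hg, hXg⟩, hb⟩ | ⟨⟨g, hg, hXg⟩, hb⟩)
    · exact ⟨⟨g, Or.inl hg, hXg⟩, hb⟩
    · exact ⟨⟨g, Or.inr hg, hXg⟩, hb⟩

/-- The Right options of the join of `G` and `H`. -/
noncomputable def joinOpts (n : ℕ) (G H : LDE) : List LDE :=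
  (R (n - 1)).filter
    (fun r => decide ((∃ g ∈ G.opts, Ge r g) ∧ (∃ h ∈ H.opts, Ge r h)))

theorem setF_inter (n : ℕ) (G H : LDE) :
    setF n (node (joinOpts n G H)) = setF n G ∩ setF n H := by
  ext X
  constructor
  · rintro ⟨⟨r, hr, hXr⟩, hb⟩
    have hr' := List.of_mem_filter hr
    obtain ⟨⟨g, hg, hrg⟩, ⟨h, hh, hrh⟩⟩ := of_decide_eq_true hr'
    exact ⟨⟨⟨g, hg, ge_trans_s10 _ _ _ hXr hrg⟩, hb⟩, ⟨⟨h, hh, ge_trans_s10 _ _ _ hXr hrh⟩, hb⟩⟩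
  · rintro ⟨⟨⟨g, hg, hXg⟩, hb⟩, ⟨⟨h, hh, hXh⟩, -⟩⟩
    obtain ⟨X', hX'X, hX'fb⟩ := bday_le_iff.1 hb
    obtain ⟨r, hrR, hrX'⟩ := R_cover (n - 1) X' hX'fb
    have hrX : Eqv r X := eqv_trans hrX' hX'X
    refine ⟨⟨r, ?_, hrX.2⟩, hb⟩
    refine List.mem_filter.2 ⟨hrR, decide_eq_true ?_⟩
    exact ⟨⟨g, hg, ge_trans_s10 _ _ _ hrX.1 hXg⟩, ⟨h, hh, ge_trans_s10 _ _ _ hrX.1 hXh⟩⟩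

theorem pred_union {n : ℕ} {S T : Set LDE} (hS : Pred n S) (hT : Pred n T) :
    Pred n (S ∪ T) := by
  rcases hS with rfl | ⟨G, hGne, hGb, rfl⟩
  · simpa using hT
  rcases hT with rfl | ⟨H, hHne, hHb, rfl⟩
  · rw [Set.union_empty]; exact Or.inr ⟨G, hGne, hGb, rfl⟩
  refine Or.inr ⟨node (G.opts ++ H.opts), ?_, bday_append hGb hHb, setF_union n G H⟩
  show G.opts ++ H.opts ≠ []
  intro h
  exact hGne (List.append_eq_nil_iff.1 h).1

theorem pred_inter {n : ℕ} (hn : 1 ≤ n) {S T : Set LDE} (hS : Pred n S) (hT : Pred n T) :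
    Pred n (S ∩ T) := by
  rcases hS with rfl | ⟨G, hGne, hGb, rfl⟩
  · simp [Pred]
  rcases hT with rfl | ⟨H, hHne, hHb, rfl⟩
  · simp [Pred]
  by_cases hJ : joinOpts n G H = []
  · left
    rw [← setF_inter n G H]
    ext X
    simp [setF, hJ, opts]
  · refine Or.inr ⟨node (joinOpts n G H), hJ, ?_, setF_inter n G H⟩
    refine le_trans (bday_le_fb _) (fb_le_of _ _ ?_)
    intro r hr
    have := fb_R (List.mem_of_mem_filter hr)
    omega

def latI (n : ℕ) (hn : 1 ≤ n) : DistribLattice (Car n) where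
  le x y := y.1 ⊆ x.1
  le_refl x := subset_rfl
  le_trans x y z h1 h2 := Set.Subset.trans h2 h1
  le_antisymm x y h1 h2 := Subtype.ext (subset_antisymm h2 h1)
  sup x y := ⟨x.1 ∩ y.1, pred_inter hn x.2 y.2⟩
  inf x y := ⟨x.1 ∪ y.1, pred_union x.2 y.2⟩
  le_sup_left x y := Set.inter_subset_left
  le_sup_right x y := Set.inter_subset_right
  sup_le x y z h1 h2 := Set.subset_inter h1 h2
  inf_le_left x y := Set.subset_union_left
  inf_le_right x y := Set.subset_union_right
  le_inf x y z h1 h2 := Set.union_subset h1 h2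
  le_sup_inf x y z := by
    rintro a ⟨hax, hayz⟩
    rcases hayz with h | h
    · exact Or.inl ⟨hax, h⟩
    · exact Or.inr ⟨hax, h⟩

noncomputable def F (n : ℕ) : LDE → Car n := fun G =>
  if h : G.opts ≠ [] ∧ G.bday ≤ n then ⟨setF n G, Or.inr ⟨G, h.1, h.2, rfl⟩⟩
  else ⟨∅, Or.inl rfl⟩

theorem F_val {n : ℕ} {G : LDE} (h1 : G.opts ≠ []) (h2 : G.bday ≤ n) :
    (F n G).1 = setF n G := by
  unfold F
  exact congrArg Subtype.val (dif_pos (⟨h1, h2⟩ : G.opts ≠ [] ∧ G.bday ≤ n))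

theorem setF_nonempty {n : ℕ} {G : LDE} (h1 : G.opts ≠ []) (h2 : G.bday ≤ n) :
    (setF n G).Nonempty := by
  obtain ⟨K, hKG, hKfb⟩ := bday_le_iff.1 h2
  have hKne : K.opts ≠ [] := ne_nil_of_ge hKG.1 h1
  obtain ⟨k, hk⟩ := List.exists_mem_of_ne_nil K.opts hKne
  refine ⟨k, ⟨?_, ?_⟩⟩
  · obtain ⟨ks⟩ := K; obtain ⟨gs⟩ := G
    have := (ge_def ks gs).1 hKG.1
    exact this.1 k hk
  · obtain ⟨ks⟩ := K
    rw [show (node ks).opts = ks from rfl] at hk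
    have := fb_lt hk
    have := bday_le_fb k
    omega

theorem setF_subset_iff {n : ℕ} {G H : LDE} (h1 : G.opts ≠ []) (h2 : G.bday ≤ n)
    (h3 : H.opts ≠ []) (h4 : H.bday ≤ n) :
    setF n H ⊆ setF n G ↔ Ge H G := by
  constructor
  · intro hsub
    obtain ⟨H', hH'H, hH'fb⟩ := bday_le_iff.1 h4
    have hH'ne : H'.opts ≠ [] := ne_nil_of_ge hH'H.1 h3
    refine ge_trans_s10 _ _ _ hH'H.2 ?_
    obtain ⟨hs'⟩ := H'; obtain ⟨gs⟩ := G
    rw [ge_def]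
    refine ⟨?_, fun e => absurd e hH'ne⟩
    intro h' hh'
    have hmem : h' ∈ setF n (node hs') := by
      refine ⟨⟨h', hh', ge_refl_s10 h'⟩, ?_⟩
      have := fb_lt hh'
      have := bday_le_fb h'
      omega
    have := hsub (setF_mono hH'H.1 hmem)
    exact this.1
  · exact setF_mono

end LDE

/-- for each `n ≥ 1`, `L_n*` is a distributive lattice with meet
given by union of Right options. -/
theorem stmt10 (n : ℕ) (hn : 1 ≤ n) :
    Nonempty (DistribLatticeRealization n) := by
  refine ⟨{ carrier := LDE.Car n, lat := LDE.latI n hn,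
            nabla := ⟨∅, Or.inl rfl⟩, f := LDE.F n,
            le_nabla := fun x => Set.empty_subset _,
            f_ne_nabla := ?_, surj := ?_, le_iff := ?_, inf_eq := ?_ }⟩
  · intro G h1 h2 heq
    have hval : (LDE.F n G).1 = (∅ : Set LDE) := congrArg Subtype.val heq
    rw [LDE.F_val h1 h2] at hval
    obtain ⟨X, hX⟩ := LDE.setF_nonempty h1 h2
    rw [hval] at hX
    exact hX
  · intro x hx
    rcases x.2 with hemp | ⟨G, h1, h2, hSet⟩
    · exact absurd (Subtype.ext hemp) hx
    · exact ⟨G, h1, h2, Subtype.ext (by rw [LDE.F_val h1 h2, hSet])⟩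
  · intro G H h1 h2 h3 h4
    show (LDE.F n H).1 ⊆ (LDE.F n G).1 ↔ _
    rw [LDE.F_val h1 h2, LDE.F_val h3 h4]
    exact LDE.setF_subset_iff h1 h2 h3 h4
  · intro G H h1 h2 h3 h4
    have hne : (LDE.node (G.opts ++ H.opts)).opts ≠ [] := by
      show G.opts ++ H.opts ≠ []
      intro h
      exact h1 (List.append_eq_nil_iff.1 h).1
    apply Subtype.ext
    show (LDE.F n G).1 ∪ (LDE.F n H).1 = _
    rw [LDE.F_val h1 h2, LDE.F_val h3 h4,
      LDE.F_val hne (LDE.bday_append h2 h4), LDE.setF_union]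
end
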